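/- Let E be a finite-dimensional real inner product space and let F : E → E be continuous and strongly monotone with modulus κ > 0, i.e., ⟨F(x) − F(y), x − y⟩ ≥ κ‖x − y‖² for all x, y ∈ E. Then F is a bijection of E onto E, and its inverse F⁻¹ is Lipschitz with constant 1/κ: for all u, v ∈ E, ‖F⁻¹(u) − F⁻¹(v)‖ ≤ (1/κ)‖u − v‖. -/

import Mathlib

open scoped RealInnerProductSpace

open Module Function

universe u

private lemma strongMono_surjective :
    ∀ (n : ℕ) {E : Type u} [NormedAddCommGroup E] [InnerProductSpace ℝ E]
      [FiniteDimensional ℝ E], finrank ℝ E = n →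
      ∀ (F : E → E), Continuous F → ∀ (κ : ℝ), 0 < κ →
      (∀ x y : E, κ * ‖x - y‖ ^ 2 ≤ ⟪F x - F y, x - y⟫) → Function.Surjective F := by
  intro n
  induction n with
  | zero =>
    intro E _ _ _ hrank F _ κ _ _ u
    have : Subsingleton E := finrank_zero_iff.mp hrank
    exact ⟨u, Subsingleton.elim _ _⟩
  | succ n ih =>
    intro E _ _ _ hrank F hF κ hκ hmono u
    -- pick a unit vector e
    have hnt : Nontrivial E := nontrivial_of_finrank_eq_succ hrank
    obtain ⟨v, hv⟩ := exists_ne (0 : E)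
    set e : E := (‖v‖⁻¹ : ℝ) • v with he_def
    have he : ‖e‖ = 1 := norm_smul_inv_norm hv
    have he0 : e ≠ 0 := by
      intro h; rw [h, norm_zero] at he; norm_num at he
    set H : Submodule ℝ E := (ℝ ∙ e)ᗮ with hH_def
    have hHrank : finrank ℝ H = n := by
      have h1 : finrank ℝ (ℝ ∙ e) = 1 := finrank_span_singleton he0
      have h2 := Submodule.finrank_add_finrank_orthogonal (K := (ℝ ∙ e))
      rw [h1, hrank, ← hH_def] at h2
      omega
    -- the scalar function along the e-direction
    set g : H → ℝ → ℝ := fun h t => ⟪F (t • e + (h : E)), e⟫ with hg_def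
    have hgc : ∀ h : H, Continuous (g h) := by
      intro h
      exact (hF.comp ((continuous_id.smul continuous_const).add continuous_const)).inner
        continuous_const
    -- key monotonicity along a line
    have key : ∀ (h : H) (t s : ℝ), κ * (t - s) ^ 2 ≤ (g h t - g h s) * (t - s) := by
      intro h t s
      have hmm := hmono (t • e + (h : E)) (s • e + (h : E))
      have hxy : (t • e + (h : E)) - (s • e + (h : E)) = (t - s) • e := by
        rw [sub_smul]; abel
      rw [hxy] at hmm
      have hn : ‖(t - s) • e‖ ^ 2 = (t - s) ^ 2 := by
        rw [norm_smul, he, mul_one, Real.norm_eq_abs, sq_abs]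
      rw [hn] at hmm
      calc κ * (t - s) ^ 2 ≤ ⟪F (t • e + (h : E)) - F (s • e + (h : E)), (t - s) • e⟫ := hmm
        _ = (g h t - g h s) * (t - s) := by
            rw [real_inner_smul_right, inner_sub_left]; ring
    have gap : ∀ (h : H) (t s : ℝ), κ * |t - s| ≤ |g h t - g h s| := by
      intro h t s
      rcases eq_or_ne t s with rfl | hts
      · simp
      · have h0 : (0 : ℝ) < |t - s| := abs_pos.mpr (sub_ne_zero.mpr hts)
        have h1 := key h t s
        have h2 : (g h t - g h s) * (t - s) ≤ |g h t - g h s| * |t - s| := by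
          rw [← abs_mul]; exact le_abs_self _
        have h3 : κ * |t - s| * |t - s| ≤ |g h t - g h s| * |t - s| := by
          have he2 : κ * |t - s| * |t - s| = κ * (t - s) ^ 2 := by
            rw [mul_assoc, abs_mul_abs_self]; ring
          rw [he2]; exact le_trans h1 h2
        exact le_of_mul_le_mul_right h3 h0
    set c : ℝ := ⟪u, e⟫ with hc_def
    -- solvability of the scalar equation
    have hex : ∀ h : H, ∃ t, g h t = c := by
      intro h
      set T : ℝ := |c - g h 0| / κ + 1 with hT_def
      have hT0 : 0 < T := by positivity
      have hcT : |c - g h 0| ≤ κ * T := by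
        rw [hT_def, mul_add, mul_one, mul_div_cancel₀ _ (ne_of_gt hκ)]
        linarith
      have hup : c ≤ g h T := by
        have h1 := key h T 0
        rw [sub_zero] at h1
        nlinarith [le_abs_self (c - g h 0)]
      have hlo : g h (-T) ≤ c := by
        have h1 := key h 0 (-T)
        nlinarith [neg_abs_le (c - g h 0)]
      obtain ⟨t, _, ht⟩ := intermediate_value_Icc (by linarith : -T ≤ T)
        (hgc h).continuousOn ⟨hlo, hup⟩
      exact ⟨t, ht⟩
    set τ : H → ℝ := fun h => (hex h).choose with hτ_def
    have hτ : ∀ h : H, g h (τ h) = c := fun h => (hex h).choose_spec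
    -- continuity of τ
    have hτc : Continuous τ := by
      rw [Metric.continuous_iff]
      intro h ε hε
      have hψ : ContinuousAt (fun h' : H => |g h' (τ h) - c|) h := by
        apply Continuous.continuousAt
        apply Continuous.abs
        apply Continuous.sub _ continuous_const
        exact (hF.comp ((continuous_const.smul continuous_const).add
          continuous_subtype_val)).inner continuous_const
      rw [Metric.continuousAt_iff] at hψ
      obtain ⟨δ, hδ0, hδ⟩ := hψ (κ * ε) (by positivity)
      refine ⟨δ, hδ0, fun h' hh' => ?_⟩
      have h1 := hδ hh'
      rw [Real.dist_eq, hτ h, sub_self, abs_zero, sub_zero, abs_abs] at h1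
      have h2 : κ * |τ h' - τ h| ≤ |g h' (τ h') - g h' (τ h)| := gap h' (τ h') (τ h)
      rw [hτ h'] at h2
      have h3 : |c - g h' (τ h)| = |g h' (τ h) - c| := abs_sub_comm _ _
      rw [h3] at h2
      have h4 : κ * |τ h' - τ h| < κ * ε := lt_of_le_of_lt h2 h1
      have := (mul_lt_mul_iff_right₀ hκ).mp h4
      rwa [Real.dist_eq]
    -- the reduced map on H
    set Φ : H → E := fun h => τ h • e + (h : E) with hΦ_def
    have hΦc : Continuous Φ := (hτc.smul continuous_const).add continuous_subtype_val
    set G : H → H := fun h => H.orthogonalProjectionOnto (F (Φ h)) with hG_def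
    have hGc : Continuous G := (H.orthogonalProjectionOnto).continuous.comp (hF.comp hΦc)
    -- strong monotonicity of G
    have hperp : ∀ h : H, ⟪e, (h : E)⟫ = 0 := by
      intro h
      exact Submodule.mem_orthogonal_singleton_iff_inner_right.mp h.2
    have hGe : ∀ h : H, ⟪F (Φ h), e⟫ = c := fun h => hτ h
    have hGmono : ∀ h h' : H, κ * ‖h - h'‖ ^ 2 ≤ ⟪G h - G h', h - h'⟫ := by
      intro h h'
      set x := Φ h with hx
      set y := Φ h' with hy
      have hxy : x - y = (τ h - τ h') • e + ((h : E) - (h' : E)) := by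
        simp only [hx, hy, hΦ_def, sub_smul]; abel
      have hw : ((h : E) - (h' : E)) ∈ H := by
        exact sub_mem h.2 h'.2
      have horth : ⟪(τ h - τ h') • e, (h : E) - (h' : E)⟫ = 0 := by
        rw [real_inner_smul_left,
          Submodule.mem_orthogonal_singleton_iff_inner_right.mp hw, mul_zero]
      have hnorm := norm_add_sq_eq_norm_sq_add_norm_sq_real horth
      rw [← hxy] at hnorm
      have hcoe : ‖h - h'‖ = ‖(h : E) - (h' : E)‖ := by
        rw [Submodule.coe_norm]; norm_cast
      have hnormge : ‖h - h'‖ ^ 2 ≤ ‖x - y‖ ^ 2 := by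
        rw [hcoe]
        nlinarith [mul_self_nonneg ‖(τ h - τ h') • e‖]
      -- inner products agree
      have hinner : ⟪G h - G h', h - h'⟫ = ⟪F x - F y, x - y⟫ := by
        have hproj : ∀ z : E, ⟪(H.orthogonalProjectionOnto z : E), (h : E) - (h' : E)⟫ = ⟪z, (h : E) - (h' : E)⟫ := by
          intro z
          have hzm : z - (H.orthogonalProjectionOnto z : E) ∈ Hᗮ :=
            Submodule.sub_starProjection_mem_orthogonal z
          have := hzm ((h : E) - (h' : E)) hw
          rw [real_inner_comm] at this
          rw [inner_sub_left] at this
          linarith [this]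
        have hecomp : ⟪F x - F y, e⟫ = 0 := by
          rw [inner_sub_left, hGe h, hGe h']; ring
        calc ⟪G h - G h', h - h'⟫
            = ⟪((G h : E) - (G h' : E)), (h : E) - (h' : E)⟫ := by
              rw [Submodule.coe_inner]; norm_cast
          _ = ⟪F x - F y, (h : E) - (h' : E)⟫ := by
              rw [inner_sub_left, inner_sub_left, hproj, hproj]
          _ = ⟪F x - F y, x - y⟫ := by
              rw [hxy, inner_add_right, real_inner_smul_right, real_inner_comm, hecomp]
              · ring
      rw [hinner]
      calc κ * ‖h - h'‖ ^ 2 ≤ κ * ‖x - y‖ ^ 2 := by nlinarith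
        _ ≤ ⟪F x - F y, x - y⟫ := hmono x y
    -- apply induction hypothesis
    obtain ⟨hstar, hhstar⟩ := ih hHrank G hGc κ hκ hGmono (H.orthogonalProjectionOnto u)
    refine ⟨Φ hstar, ?_⟩
    have h1 : F (Φ hstar) - u ∈ H := by
      have hA : ⟪e, F (Φ hstar)⟫ = c := by rw [real_inner_comm]; exact hGe hstar
      have hB : ⟪e, u⟫ = c := by rw [real_inner_comm]
      rw [hH_def, Submodule.mem_orthogonal_singleton_iff_inner_right, inner_sub_right,
        hA, hB, sub_self]
    have hhstar' : H.orthogonalProjectionOnto (F (Φ hstar)) = H.orthogonalProjectionOnto u := hhstar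
    have h2 : H.orthogonalProjectionOnto (F (Φ hstar) - u) = 0 := by
      rw [map_sub, hhstar', sub_self]
    have h3 : (H.orthogonalProjectionOnto (F (Φ hstar) - u) : E) = F (Φ hstar) - u :=
      Submodule.starProjection_eq_self_iff.mpr h1
    rw [h2] at h3
    have h4 : F (Φ hstar) - u = 0 := by
      rw [← h3]; simp
    exact sub_eq_zero.mp h4

/-- **Browder–Minty in finite dimensions.**
A continuous, strongly monotone map `F` (with modulus `κ > 0`) on a finite-dimensional
real inner product space is a bijection whose inverse is Lipschitz with constant `1/κ`. -/
theorem browder_minty_finite_dim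
    {E : Type*} [NormedAddCommGroup E] [InnerProductSpace ℝ E] [FiniteDimensional ℝ E]
    (F : E → E) (hF : Continuous F)
    (κ : ℝ) (hκ : 0 < κ)
    (hmono : ∀ x y : E, κ * ‖x - y‖ ^ 2 ≤ ⟪F x - F y, x - y⟫) :
    Function.Bijective F ∧
      ∀ u v : E, ‖Function.invFun F u - Function.invFun F v‖ ≤ (1 / κ) * ‖u - v‖ := by
  have hsurj : Function.Surjective F :=
    strongMono_surjective (Module.finrank ℝ E) rfl F hF κ hκ hmono
  have hinj : Function.Injective F := by
    intro x y hxy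
    by_contra hne
    have h1 := hmono x y
    rw [hxy, sub_self, inner_zero_left] at h1
    have h2 : 0 < ‖x - y‖ := norm_pos_iff.mpr (sub_ne_zero.mpr hne)
    nlinarith [mul_pos hκ (mul_pos h2 h2)]
  refine ⟨⟨hinj, hsurj⟩, fun u v => ?_⟩
  set x := Function.invFun F u with hx
  set y := Function.invFun F v with hy
  have hFx : F x = u := Function.invFun_eq (hsurj u)
  have hFy : F y = v := Function.invFun_eq (hsurj v)
  rcases eq_or_ne x y with heq | hne
  · rw [heq, sub_self, norm_zero]
    positivity
  · have h1 := hmono x y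
    have h2 : ⟪F x - F y, x - y⟫ ≤ ‖F x - F y‖ * ‖x - y‖ := real_inner_le_norm _ _
    have h3 : 0 < ‖x - y‖ := norm_pos_iff.mpr (sub_ne_zero.mpr hne)
    have h4 : κ * ‖x - y‖ ≤ ‖F x - F y‖ := by nlinarith
    rw [hFx, hFy] at h4
    rw [div_mul_eq_mul_div, le_div_iff₀ hκ]
    nlinarith
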